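/- Let L ⊆ ℝⁿ be a linear subspace and K ⊆ ℝⁿ a closed convex cone, and suppose x̄ ∈ L satisfies x̄ + u ∈ K for all ‖u‖ ≤ 1. Then for every v ∈ ℝⁿ there exist x ∈ L and y ∈ K with x − y = v and ‖x‖ ≤ ‖x̄‖ · ‖v‖; consequently Ĥ(L,K) ≤ 1 + 2‖x̄‖. -/

import Mathlib

/-- If `xbar ∈ L` and the unit ball centered at `xbar` is contained in the
closed convex cone `K`, then every `v` decomposes as `v = x - y` with `x ∈ L`,
`y ∈ K`, `‖x‖ ≤ ‖xbar‖⬝‖v‖`; consequently `Ĥ(L,K) ≤ 1 + 2‖xbar‖`. -/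
theorem stmt13 {n : ℕ} (nn : Seminorm ℝ (Fin n → ℝ)) (hnn : ∀ x, nn x = 0 → x = 0)
    (L : Submodule ℝ (Fin n → ℝ)) (K : Set (Fin n → ℝ))
    (hKclosed : IsClosed K) (hKconv : Convex ℝ K)
    (hKcone : ∀ c : ℝ, 0 < c → ∀ x ∈ K, c • x ∈ K)
    (xbar : Fin n → ℝ) (hxbarL : xbar ∈ L)
    (hxbarK : ∀ u : Fin n → ℝ, nn u ≤ 1 → xbar + u ∈ K) :
    (∀ v : Fin n → ℝ, ∃ x ∈ (L : Set (Fin n → ℝ)), ∃ y ∈ K,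
        x - y = v ∧ nn x ≤ nn xbar * nn v) ∧
    sSup {r | ∃ u : Fin n → ℝ, u ∉ (L : Set (Fin n → ℝ)) ∩ K ∧
        r = sInf {s | ∃ w ∈ (L : Set (Fin n → ℝ)) ∩ K, s = nn (u - w)} /
          max (sInf {s | ∃ w ∈ (L : Set (Fin n → ℝ)), s = nn (u - w)})
              (sInf {s | ∃ w ∈ K, s = nn (u - w)})} ≤
      1 + 2 * nn xbar := by
  have hxbarK0 : xbar ∈ K := by simpa using hxbarK 0 (by simp)
  have hK0 : (0 : Fin n → ℝ) ∈ K := by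
    have htend : Filter.Tendsto (fun k : ℕ => (1 / (k + 1) : ℝ) • xbar)
        Filter.atTop (nhds 0) := by
      simpa using (tendsto_one_div_add_atTop_nhds_zero_nat :
        Filter.Tendsto (fun k : ℕ => 1 / ((k : ℝ) + 1)) Filter.atTop (nhds 0)).smul_const xbar
    exact hKclosed.mem_of_tendsto htend
      (Filter.Eventually.of_forall fun k => hKcone _ (by positivity) _ hxbarK0)
  have hKadd : ∀ a ∈ K, ∀ b ∈ K, a + b ∈ K := by
    intro a ha b hb
    have h := hKconv ha hb (by norm_num : (0:ℝ) ≤ 1/2) (by norm_num : (0:ℝ) ≤ 1/2)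
      (by norm_num)
    have h2 := hKcone 2 (by norm_num) _ h
    have : (2:ℝ) • ((1/2:ℝ) • a + (1/2:ℝ) • b) = a + b := by
      rw [smul_add, smul_smul, smul_smul]; norm_num
    rwa [this] at h2
  have key : ∀ v : Fin n → ℝ, ∃ x ∈ (L : Set (Fin n → ℝ)), ∃ y ∈ K,
      x - y = v ∧ nn x ≤ nn xbar * nn v := by
    intro v
    by_cases hv : nn v = 0
    · have hv0 : v = 0 := hnn v hv
      exact ⟨0, L.zero_mem, 0, hK0, by simp [hv0], by simp [hv]⟩
    · have ht : 0 < nn v := lt_of_le_of_ne (apply_nonneg nn v) (Ne.symm hv)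
      refine ⟨nn v • xbar, L.smul_mem _ hxbarL, nn v • xbar - v, ?_, by abel, ?_⟩
      · have h1 : xbar + (-(nn v)⁻¹) • v ∈ K := by
          apply hxbarK
          rw [map_smul_eq_mul]
          rw [Real.norm_eq_abs, abs_neg, abs_inv, abs_of_nonneg (apply_nonneg nn v),
            inv_mul_cancel₀ hv]
        have h2 := hKcone (nn v) ht _ h1
        have : nn v • (xbar + (-(nn v)⁻¹) • v) = nn v • xbar - v := by
          rw [smul_add, smul_smul, mul_neg, mul_inv_cancel₀ hv]
          simp [sub_eq_add_neg]
        rwa [this] at h2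
      · rw [map_smul_eq_mul, Real.norm_eq_abs, abs_of_nonneg (apply_nonneg nn v), mul_comm]
  have hB : (0:ℝ) ≤ nn xbar := apply_nonneg nn xbar
  refine ⟨key, ?_⟩
  apply Real.sSup_le
  · rintro r ⟨u, huLK, rfl⟩
    set SLK := {s | ∃ w ∈ (L : Set (Fin n → ℝ)) ∩ K, s = nn (u - w)} with hSLK
    set SL := {s | ∃ w ∈ (L : Set (Fin n → ℝ)), s = nn (u - w)} with hSL
    set SK := {s | ∃ w ∈ K, s = nn (u - w)} with hSK
    have hSLKne : SLK.Nonempty := ⟨nn (u - xbar), xbar, ⟨hxbarL, hxbarK0⟩, rfl⟩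
    have hSLne : SL.Nonempty := ⟨nn (u - xbar), xbar, hxbarL, rfl⟩
    have hSKne : SK.Nonempty := ⟨nn (u - xbar), xbar, hxbarK0, rfl⟩
    have hbdLK : BddBelow SLK := ⟨0, by rintro s ⟨w, _, rfl⟩; exact apply_nonneg nn _⟩
    have hbdL : BddBelow SL := ⟨0, by rintro s ⟨w, _, rfl⟩; exact apply_nonneg nn _⟩
    have hbdK : BddBelow SK := ⟨0, by rintro s ⟨w, _, rfl⟩; exact apply_nonneg nn _⟩
    set dL := sInf SL with hdL
    set dK := sInf SK with hdK
    set m := max dL dK with hm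
    have hdL0 : 0 ≤ dL := le_csInf hSLne (by rintro s ⟨w, _, rfl⟩; exact apply_nonneg nn _)
    have hdK0 : 0 ≤ dK := le_csInf hSKne (by rintro s ⟨w, _, rfl⟩; exact apply_nonneg nn _)
    have hm0 : 0 ≤ m := le_max_of_le_left hdL0
    rcases eq_or_lt_of_le hm0 with hm0' | hmpos
    · rw [← hm0', div_zero]
      positivity
    · rw [div_le_iff₀ hmpos]
      -- main estimate: sInf SLK ≤ (1 + 2 * nn xbar) * m
      have main : ∀ ε : ℝ, 0 < ε →
          sInf SLK ≤ (1 + 2 * nn xbar) * m + (1 + 2 * nn xbar) * ε := by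
        intro ε hε
        obtain ⟨sL, ⟨wL, hwL, rfl⟩, hsL⟩ := Real.lt_sInf_add_pos hSLne hε
        obtain ⟨sK, ⟨wK, hwK, rfl⟩, hsK⟩ := Real.lt_sInf_add_pos hSKne hε
        obtain ⟨x, hxL, y, hyK, hxy, hnx⟩ := key (wK - wL)
        have hwmemL : wL + x ∈ (L : Set (Fin n → ℝ)) := L.add_mem hwL hxL
        have hwmemK : wL + x ∈ K := by
          have hx : x = (wK - wL) + y := by rw [← hxy]; abel
          have : wL + x = wK + y := by rw [hx]; abel
          rw [this]
          exact hKadd _ hwK _ hyK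
        have h1 : sInf SLK ≤ nn (u - (wL + x)) :=
          csInf_le hbdLK ⟨wL + x, ⟨hwmemL, hwmemK⟩, rfl⟩
        have h2 : nn (u - (wL + x)) ≤ nn (u - wL) + nn x := by
          have : u - (wL + x) = (u - wL) + (-x) := by abel
          rw [this]
          calc nn ((u - wL) + (-x)) ≤ nn (u - wL) + nn (-x) := map_add_le_add nn _ _
            _ = nn (u - wL) + nn x := by rw [map_neg_eq_map]
        have h3 : nn (wK - wL) ≤ nn (u - wK) + nn (u - wL) := by
          have : wK - wL = -(u - wK) + (u - wL) := by abel
          rw [this]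
          calc nn (-(u - wK) + (u - wL)) ≤ nn (-(u - wK)) + nn (u - wL) :=
                map_add_le_add nn _ _
            _ = nn (u - wK) + nn (u - wL) := by rw [map_neg_eq_map]
        have hdLm : dL ≤ m := le_max_left _ _
        have hdKm : dK ≤ m := le_max_right _ _
        have h4 : nn (wK - wL) ≤ 2 * m + 2 * ε := by
          have := h3
          nlinarith [hsL.le, hsK.le]
        calc sInf SLK ≤ nn (u - wL) + nn x := h1.trans h2
          _ ≤ (dL + ε) + nn xbar * (2 * m + 2 * ε) := by
              have := hnx.trans (mul_le_mul_of_nonneg_left h4 hB)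
              linarith [hsL.le]
          _ ≤ (1 + 2 * nn xbar) * m + (1 + 2 * nn xbar) * ε := by nlinarith
      have hfin : sInf SLK ≤ (1 + 2 * nn xbar) * m := by
        apply le_of_forall_pos_le_add
        intro δ hδ
        have hc : (0:ℝ) < 1 + 2 * nn xbar := by linarith
        have := main (δ / (1 + 2 * nn xbar)) (by positivity)
        rwa [mul_div_cancel₀ _ (ne_of_gt hc)] at this
      exact hfin
  · positivity
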